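/- Assume the restricted eigenvalue condition, min_{j∈T} θ_j² ≥ 8βD log p/(nν²), βD ≥ 2L, 2/β ≤ 3D log p, and that events E_n and A_n hold. Then for every S ⊆ {1,…,p} with S ≠ T and |S \ T| ≤ 3s*, one has π(𝒢(S)) ≥ exp((D/2) log p)·π(S) ≥ π(S). -/

import Mathlib

open scoped BigOperators
open Finset

noncomputable section

/-- Span of the columns `X j`, `j ∈ S`. -/
def colSpan {n p : ℕ} (X : Fin p → EuclideanSpace ℝ (Fin n)) (S : Finset (Fin p)) :
    Submodule ℝ (EuclideanSpace ℝ (Fin n)) :=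
  Submodule.span ℝ (X '' ↑S)

/-- `Φ_S`, the orthogonal projection of ℝ^n onto the span of the columns in `S`. -/
noncomputable def proj {n p : ℕ} (X : Fin p → EuclideanSpace ℝ (Fin n)) (S : Finset (Fin p)) :
    EuclideanSpace ℝ (Fin n) →ₗ[ℝ] EuclideanSpace ℝ (Fin n) :=
  (colSpan X S).subtype ∘ₗ ((colSpan X S).orthogonalProjection).toLinearMap

/-- Restricted eigenvalue condition: `‖X_S w‖² ≥ n ν ‖w‖²` for all `S` with `|S| ≤ m`. -/
def RECond {n p : ℕ} (X : Fin p → EuclideanSpace ℝ (Fin n)) (ν : ℝ) (m : ℕ) : Prop :=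
  ∀ S : Finset (Fin p), S.card ≤ m → ∀ w : Fin p → ℝ,
    (n : ℝ) * ν * ∑ j ∈ S, w j ^ 2 ≤ ‖∑ j ∈ S, w j • X j‖ ^ 2

/-- The unnormalized weight exp(G(S,Y) − m(S)), where G(S,Y) = ‖Φ_S Y‖²/β and
m(S) = D|S| log p + (2/β) trace(Φ_S) + (4n/β) 1{|S| > 4s}. -/
noncomputable def postWt {n p : ℕ} (X : Fin p → EuclideanSpace ℝ (Fin n))
    (Y : EuclideanSpace ℝ (Fin n)) (β D : ℝ) (s : ℕ) (S : Finset (Fin p)) : ℝ :=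
  Real.exp (‖proj X S Y‖ ^ 2 / β -
    (D * S.card * Real.log p +
      2 * LinearMap.trace ℝ (EuclideanSpace ℝ (Fin n)) (proj X S) / β +
      if 4 * s < S.card then 4 * n / β else 0))

/-- The probability distribution π(S) ∝ exp(G(S,Y) − m(S)) on subsets of {1,…,p}. -/
noncomputable def postPi {n p : ℕ} (X : Fin p → EuclideanSpace ℝ (Fin n))
    (Y : EuclideanSpace ℝ (Fin n)) (β D : ℝ) (s : ℕ) (S : Finset (Fin p)) : ℝ :=
  postWt X Y β D s S / ∑ S' : Finset (Fin p), postWt X Y β D s S'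

/- ### Auxiliary lemmas -/

open scoped RealInnerProductSpace

section aux
variable {n p : ℕ} {X : Fin p → EuclideanSpace ℝ (Fin n)}

lemma proj_apply (S : Finset (Fin p)) (v : EuclideanSpace ℝ (Fin n)) :
    proj X S v = ((colSpan X S).orthogonalProjection v : EuclideanSpace ℝ (Fin n)) := rfl

lemma colSpan_mono {S S' : Finset (Fin p)} (h : S ⊆ S') : colSpan X S ≤ colSpan X S' :=
  Submodule.span_mono (Set.image_mono (by exact_mod_cast h))

lemma mem_colSpan {S : Finset (Fin p)} {j : Fin p} (hj : j ∈ S) : X j ∈ colSpan X S :=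
  Submodule.subset_span ⟨j, hj, rfl⟩

lemma proj_mem (S : Finset (Fin p)) (v : EuclideanSpace ℝ (Fin n)) :
    proj X S v ∈ colSpan X S := ((colSpan X S).orthogonalProjection v).2

lemma sub_proj_mem_orthogonal (S : Finset (Fin p)) (v : EuclideanSpace ℝ (Fin n)) :
    v - proj X S v ∈ (colSpan X S)ᗮ :=
  Submodule.sub_starProjection_mem_orthogonal (K := colSpan X S) v

lemma inner_sub_proj_left (S : Finset (Fin p)) (v w : EuclideanSpace ℝ (Fin n))
    (hw : w ∈ colSpan X S) : ⟪w, v - proj X S v⟫ = 0 :=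
  (sub_proj_mem_orthogonal S v) w hw

lemma proj_eq_self {S : Finset (Fin p)} {v : EuclideanSpace ℝ (Fin n)}
    (hv : v ∈ colSpan X S) : proj X S v = v := by
  rw [proj_apply]; exact Submodule.starProjection_eq_self_iff.2 hv

lemma isProj_proj (S : Finset (Fin p)) : LinearMap.IsProj (colSpan X S) (proj X S) :=
  ⟨proj_mem S, fun _ h => proj_eq_self h⟩

lemma trace_proj (S : Finset (Fin p)) :
    LinearMap.trace ℝ (EuclideanSpace ℝ (Fin n)) (proj X S)
      = (Module.finrank ℝ (colSpan X S) : ℝ) := by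
  rw [(isProj_proj S).trace]

lemma norm_sub_proj_le (S : Finset (Fin p)) (v : EuclideanSpace ℝ (Fin n)) :
    ‖v - proj X S v‖ ≤ ‖v‖ := by
  have h : ‖v‖ ^ 2 = ‖proj X S v‖ ^ 2 + ‖v - proj X S v‖ ^ 2 := by
    have := norm_add_sq_real (proj X S v) (v - proj X S v)
    have hz : ⟪proj X S v, v - proj X S v⟫ = 0 :=
      inner_sub_proj_left S v _ (proj_mem S v)
    simp only [hz, mul_zero, add_zero] at this
    simpa using this
  nlinarith [norm_nonneg (v - proj X S v), norm_nonneg v, norm_nonneg (proj X S v)]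

lemma exists_repr {S : Finset (Fin p)} {v : EuclideanSpace ℝ (Fin n)}
    (hv : v ∈ colSpan X S) :
    ∃ w : Fin p → ℝ, (∀ j ∉ S, w j = 0) ∧ ∑ j ∈ S, w j • X j = v := by
  obtain ⟨l, hl, rfl⟩ := (Finsupp.mem_span_image_iff_linearCombination ℝ).1 hv
  have hsupp : l.support ⊆ S := by
    intro j hj; exact_mod_cast hl hj
  refine ⟨l, fun j hj => ?_, ?_⟩
  · by_contra h
    exact hj (hsupp (Finsupp.mem_support_iff.2 h))
  · rw [Finsupp.linearCombination_apply, Finsupp.sum]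
    refine (Finset.sum_subset hsupp ?_).symm
    intro j _ hj
    rw [Finsupp.notMem_support_iff.1 hj, zero_smul]

lemma colSpan_insert (i : Fin p) (S : Finset (Fin p)) :
    colSpan X (insert i S) = colSpan X S ⊔ (ℝ ∙ X i) := by
  unfold colSpan
  rw [Finset.coe_insert, Set.image_insert_eq, Submodule.span_insert, sup_comm]

/-- the rank-one update formula for the orthogonal projection -/
lemma proj_insert {S : Finset (Fin p)} {i : Fin p}
    (h : X i - proj X S (X i) ≠ 0) (v : EuclideanSpace ℝ (Fin n)) :
    proj X (insert i S) v = proj X S v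
      + (⟪X i - proj X S (X i), v⟫ / ‖X i - proj X S (X i)‖ ^ 2) • (X i - proj X S (X i)) := by
  set q := X i - proj X S (X i) with hq
  have hqn : ‖q‖ ≠ 0 := norm_ne_zero_iff.2 h
  have hqK : q ∈ (colSpan X S)ᗮ := sub_proj_mem_orthogonal S (X i)
  have hqsup : q ∈ colSpan X S ⊔ (ℝ ∙ X i) :=
    Submodule.sub_mem _ (Submodule.mem_sup_right (Submodule.mem_span_singleton_self _))
      (Submodule.mem_sup_left (proj_mem S (X i)))
  rw [proj_apply, colSpan_insert]
  apply Submodule.eq_starProjection_of_mem_orthogonal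
  · exact Submodule.add_mem _ (Submodule.mem_sup_left (proj_mem S v))
      (Submodule.smul_mem _ _ hqsup)
  · rw [← Submodule.inf_orthogonal]
    have hzK : v - (proj X S v + (⟪q, v⟫ / ‖q‖ ^ 2) • q) ∈ (colSpan X S)ᗮ := by
      rw [sub_add_eq_sub_sub]
      exact Submodule.sub_mem _ (sub_proj_mem_orthogonal S v) (Submodule.smul_mem _ _ hqK)
    refine Submodule.mem_inf.2 ⟨hzK, ?_⟩
    rw [Submodule.mem_orthogonal_singleton_iff_inner_right]
    have hXi : X i = proj X S (X i) + q := by rw [hq]; abel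
    have h1 : ⟪proj X S (X i), v - (proj X S v + (⟪q, v⟫ / ‖q‖ ^ 2) • q)⟫ = 0 :=
      hzK _ (proj_mem S (X i))
    have h2 : ⟪q, proj X S v⟫ = 0 := by rw [real_inner_comm]; exact hqK _ (proj_mem S v)
    have h3 : ⟪q, q⟫ = ‖q‖ ^ 2 := real_inner_self_eq_norm_sq q
    rw [hXi, inner_add_left, h1, zero_add, inner_sub_right, inner_add_right,
      real_inner_smul_right, h2, h3]
    field_simp
    ring

lemma normsq_proj_insert {S : Finset (Fin p)} {i : Fin p}
    (h : X i - proj X S (X i) ≠ 0) (v : EuclideanSpace ℝ (Fin n)) :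
    ‖proj X (insert i S) v‖ ^ 2
      = ‖proj X S v‖ ^ 2 + ⟪X i - proj X S (X i), v⟫ ^ 2 / ‖X i - proj X S (X i)‖ ^ 2 := by
  set q := X i - proj X S (X i) with hq
  have hqn : ‖q‖ ≠ 0 := norm_ne_zero_iff.2 h
  have hqK : q ∈ (colSpan X S)ᗮ := sub_proj_mem_orthogonal S (X i)
  rw [proj_insert h v, norm_add_sq_real]
  have hz : ⟪proj X S v, (⟪q, v⟫ / ‖q‖ ^ 2) • q⟫ = 0 := by
    rw [real_inner_smul_right, real_inner_comm, hqK _ (proj_mem S v), mul_zero]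
  rw [hz, norm_smul]
  have : (‖⟪q, v⟫ / ‖q‖ ^ 2‖ * ‖q‖) ^ 2 = ⟪q, v⟫ ^ 2 / ‖q‖ ^ 2 := by
    rw [mul_pow, Real.norm_eq_abs, sq_abs]
    field_simp
  rw [mul_zero, add_zero, this]

/-- RE lower bound for the residual of a sparse vector. -/
lemma re_residual {m : ℕ} {ν : ℝ} (hRE : RECond X ν m) (hν : 0 ≤ (n:ℝ) * ν)
    {S B : Finset (Fin p)} (hcard : (B ∪ S).card ≤ m) (θ : Fin p → ℝ)
    (hθ : ∀ j ∉ B, θ j = 0) :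
    (n : ℝ) * ν * ∑ j ∈ B \ S, θ j ^ 2
      ≤ ‖(∑ j, θ j • X j) - proj X S (∑ j, θ j • X j)‖ ^ 2 := by
  obtain ⟨w, hw0, hwsum⟩ := exists_repr (proj_mem S (∑ j, θ j • X j))
  have hv : (∑ j, θ j • X j) = ∑ j ∈ B ∪ S, θ j • X j := by
    refine (Finset.sum_subset (Finset.subset_univ _) fun j _ hj => ?_).symm
    rw [hθ j (fun hB => hj (Finset.mem_union_left _ hB)), zero_smul]
  have hw : proj X S (∑ j, θ j • X j) = ∑ j ∈ B ∪ S, w j • X j := by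
    rw [← hwsum]
    refine Finset.sum_subset Finset.subset_union_right fun j _ hj => ?_
    rw [hw0 j hj, zero_smul]
  have hres : (∑ j, θ j • X j) - proj X S (∑ j, θ j • X j)
      = ∑ j ∈ B ∪ S, (θ j - w j) • X j := by
    rw [hw, hv, ← Finset.sum_sub_distrib]
    congr 1; ext j; rw [sub_smul]
  rw [hres]
  refine le_trans ?_ (hRE _ hcard _)
  apply mul_le_mul_of_nonneg_left _ hν
  refine le_trans (le_of_eq (Finset.sum_congr rfl fun j hj => ?_))
    (Finset.sum_le_sum_of_subset_of_nonneg
      (Finset.sdiff_subset.trans Finset.subset_union_left) fun j _ _ => sq_nonneg _)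
  rw [hw0 j (Finset.mem_sdiff.1 hj).2]
  ring

/-- RE lower bound for the distance of a column to the span of other columns. -/
lemma re_dist_sq {m : ℕ} {ν : ℝ} (hRE : RECond X ν m) (hν : 0 ≤ (n:ℝ) * ν)
    {S : Finset (Fin p)} {i : Fin p} (hi : i ∉ S) (hcard : (insert i S).card ≤ m) :
    (n : ℝ) * ν ≤ ‖X i - proj X S (X i)‖ ^ 2 := by
  have h := re_residual hRE hν (B := {i}) (S := S)
    (by rwa [← Finset.insert_eq]) (fun j => if j = i then (1:ℝ) else 0)
    (fun j hj => if_neg (by simpa using hj))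
  have h1 : ({i} : Finset (Fin p)) \ S = {i} :=
    Finset.sdiff_eq_self_of_disjoint (Finset.disjoint_singleton_left.2 hi)
  have h2 : (∑ j, (if j = i then (1:ℝ) else 0) • X j) = X i := by
    rw [Finset.sum_eq_single i (fun j _ hj => by rw [if_neg hj, zero_smul])
      (fun hj => absurd (Finset.mem_univ i) hj), if_pos rfl, one_smul]
  rw [h1, h2] at h
  simpa using h

end aux

lemma quad_aux {x y c : ℝ} (hc : 0 ≤ c) (h1 : 8 * c ≤ x ^ 2) (h2 : y ^ 2 ≤ c / 2) :
    (9/2) * c ≤ (x + y) ^ 2 := by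
  nlinarith [sq_nonneg (x + 4 * y)]

set_option maxHeartbeats 2000000 in
/-- under the RE condition, the beta-min condition, βD ≥ 2L, 2/β ≤ 3D log p and
events E_n and A_n, for every S ≠ T with |S \ T| ≤ 3s*:
π(𝒢(S)) ≥ exp((D/2) log p)·π(S) ≥ π(S). -/
theorem stmt10 {n p s : ℕ} (hn : 0 < n) (hp : 2 ≤ p) (hs : 0 < s) (hsp : 6 * s ≤ p)
    (X : Fin p → EuclideanSpace ℝ (Fin n))
    (hX : ∀ j, ‖X j‖ = Real.sqrt n)
    {ν : ℝ} (hν : 0 < ν) (hRE : RECond X ν (6 * s))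
    (θ : Fin p → ℝ) (T : Finset (Fin p)) (hT : T = Finset.univ.filter fun j => θ j ≠ 0)
    (hTcard : T.card = s)
    (ε Y : EuclideanSpace ℝ (Fin n)) (hY : Y = (∑ j, θ j • X j) + ε)
    (β D c L : ℝ) (hβ : 0 < β) (hD : 0 < D) (hc : 0 < c) (hL : 0 < L)
    (hmin : ∀ j ∈ T, 8 * β * D * Real.log p / ((n : ℝ) * ν ^ 2) ≤ θ j ^ 2)
    (hβD : 2 * L ≤ β * D) (hβD' : 2 / β ≤ 3 * D * Real.log p)
    (hE : ∀ S : Finset (Fin p), S.card < 6 * s → ∀ j ∉ S,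
      (inner ℝ (X j - proj X S (X j)) ε : ℝ) ^ 2 ≤ (n : ℝ) * L * ν * Real.log p)
    (That : Finset (Fin p)) (hThatcard : That.card ≤ 2 * s)
    (hThatrisk : ‖(∑ j, θ j • X j) - proj X That (∑ j, θ j • X j)‖ ^ 2 ≤
      c * s * Real.log p)
    (Gmap : Finset (Fin p) → Finset (Fin p))
    (hG1 : ∀ S, S ≠ T → (S \ T).card ≤ 3 * s → T ⊆ S →
      ∃ i ∈ S \ T, Gmap S = S.erase i)
    (hG2 : ∀ S, (S \ T).card ≤ 3 * s → ¬ T ⊆ S →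
      ∃ i ∈ T \ S, Gmap S = insert i S ∧ ∀ j ∈ T \ S,
        ‖proj X (insert j S) (∑ k, θ k • X k)‖ ≤ ‖proj X (insert i S) (∑ k, θ k • X k)‖)
    (hG3 : ∀ S, 3 * s < (S \ T).card → Gmap S = That) :
    ∀ S : Finset (Fin p), S ≠ T → (S \ T).card ≤ 3 * s →
      Real.exp ((D / 2) * Real.log p) * postPi X Y β D s S ≤ postPi X Y β D s (Gmap S) ∧
      postPi X Y β D s S ≤ Real.exp ((D / 2) * Real.log p) * postPi X Y β D s S := by
  intro S hST hS3
  have hp1 : (1:ℝ) < p := by exact_mod_cast lt_of_lt_of_le one_lt_two hp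
  have hlogp : 0 < Real.log p := Real.log_pos hp1
  have hZ : 0 < ∑ S' : Finset (Fin p), postWt X Y β D s S' :=
    Finset.sum_pos (fun S' _ => Real.exp_pos _) Finset.univ_nonempty
  have hθ0 : ∀ j ∉ T, θ j = 0 := by
    intro j hj
    by_contra h
    exact hj (hT ▸ Finset.mem_filter.2 ⟨Finset.mem_univ j, h⟩)
  have hXθT : (∑ j, θ j • X j) = ∑ j ∈ T, θ j • X j :=
    (Finset.sum_subset (Finset.subset_univ T) fun j _ hj => by
      rw [hθ0 j hj, zero_smul]).symm
  have hXθmem : ∀ S' : Finset (Fin p), T ⊆ S' → (∑ j, θ j • X j) ∈ colSpan X S' := by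
    intro S' hTS'
    rw [hXθT]
    exact Submodule.sum_mem _ fun j hj => Submodule.smul_mem _ _ (mem_colSpan (hTS' hj))
  have hnν : 0 < (n:ℝ) * ν := mul_pos (by exact_mod_cast hn) hν
  have hcST : (S \ T).card + (S ∩ T).card = S.card := Finset.card_sdiff_add_card_inter S T
  have hcint : (S ∩ T).card ≤ s := hTcard ▸ Finset.card_le_card Finset.inter_subset_right
  have hcs4 : S.card ≤ 4 * s := by omega
  have key : Real.exp ((D/2) * Real.log p) * postWt X Y β D s S
      ≤ postWt X Y β D s (Gmap S) := by
    unfold postWt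
    rw [← Real.exp_add, Real.exp_le_exp]
    by_cases hTS : T ⊆ S
    · -- backward step: remove a spurious variable
      obtain ⟨i, hiST, hGS⟩ := hG1 S hST hS3 hTS
      obtain ⟨hiS, hiT⟩ := Finset.mem_sdiff.1 hiST
      rw [hGS]
      set S' := S.erase i with hS'def
      have hins : insert i S' = S := Finset.insert_erase hiS
      have hiS' : i ∉ S' := Finset.notMem_erase i S
      have hcS' : S'.card + 1 = S.card := Finset.card_erase_add_one hiS
      have hTS' : T ⊆ S' := fun j hj =>
        Finset.mem_erase.2 ⟨fun he => hiT (he ▸ hj), hTS hj⟩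
      have hqn : (n:ℝ) * ν ≤ ‖X i - proj X S' (X i)‖ ^ 2 :=
        re_dist_sq hRE hnν.le hiS' (by rw [hins]; omega)
      have hq0 : X i - proj X S' (X i) ≠ 0 := by
        intro h
        rw [h, norm_zero] at hqn
        norm_num at hqn
        exact absurd hqn (not_le.2 hnν)
      have hqXθ : ⟪X i - proj X S' (X i), (∑ j, θ j • X j)⟫ = 0 := by
        rw [real_inner_comm]
        exact inner_sub_proj_left S' (X i) _ (hXθmem S' hTS')
      have hqY : ⟪X i - proj X S' (X i), Y⟫ = ⟪X i - proj X S' (X i), ε⟫ := by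
        rw [hY, inner_add_right, hqXθ, zero_add]
      have hqe : ⟪X i - proj X S' (X i), ε⟫ ^ 2 ≤ (n:ℝ) * L * ν * Real.log p :=
        hE S' (by omega) i hiS'
      have hbound : ⟪X i - proj X S' (X i), Y⟫ ^ 2 / ‖X i - proj X S' (X i)‖ ^ 2
          ≤ L * Real.log p := by
        rw [hqY]
        have h1 : ⟪X i - proj X S' (X i), ε⟫ ^ 2 / ‖X i - proj X S' (X i)‖ ^ 2
            ≤ ((n:ℝ) * L * ν * Real.log p) / ((n:ℝ) * ν) :=
          div_le_div₀ (by positivity) hqe hnν hqn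
        have h2 : ((n:ℝ) * L * ν * Real.log p) / ((n:ℝ) * ν) = L * Real.log p := by
          field_simp
        exact h1.trans_eq h2
      have htr : LinearMap.trace ℝ (EuclideanSpace ℝ (Fin n)) (proj X S')
          ≤ LinearMap.trace ℝ (EuclideanSpace ℝ (Fin n)) (proj X S) := by
        rw [trace_proj, trace_proj]
        exact_mod_cast Submodule.finrank_mono (colSpan_mono (Finset.erase_subset i S))
      have hnormsq : ‖proj X S Y‖ ^ 2 = ‖proj X S' Y‖ ^ 2
          + ⟪X i - proj X S' (X i), Y⟫ ^ 2 / ‖X i - proj X S' (X i)‖ ^ 2 := by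
        rw [← hins]
        exact normsq_proj_insert hq0 Y
      rw [hnormsq, if_neg (show ¬ 4 * s < S.card by omega),
        if_neg (show ¬ 4 * s < S'.card by omega)]
      have hcR : (S.card : ℝ) = (S'.card : ℝ) + 1 := by exact_mod_cast hcS'.symm
      rw [hcR, add_div]
      have h2 : (⟪X i - proj X S' (X i), Y⟫ ^ 2 / ‖X i - proj X S' (X i)‖ ^ 2) / β
          ≤ (D/2) * Real.log p := by
        rw [div_le_iff₀ hβ]
        have hLD : L * Real.log p ≤ D / 2 * Real.log p * β := by
          have h4 := mul_le_mul_of_nonneg_right hβD hlogp.le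
          linarith only [h4]
        linarith only [hbound, hLD]
      have h3 : 2 * LinearMap.trace ℝ (EuclideanSpace ℝ (Fin n)) (proj X S') / β
          ≤ 2 * LinearMap.trace ℝ (EuclideanSpace ℝ (Fin n)) (proj X S) / β :=
        (div_le_div_iff_of_pos_right hβ).2 (by linarith only [htr])
      linarith only [h2, h3]
    · -- forward step: add a relevant variable
      obtain ⟨i, hiTS, hGS, hmax⟩ := hG2 S hS3 hTS
      obtain ⟨hiT, hiS⟩ := Finset.mem_sdiff.1 hiTS
      rw [hGS]
      have hcint' : (S ∩ T).card < s := by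
        have : (S ∩ T).card < T.card := Finset.card_lt_card
          ((Finset.ssubset_iff_of_subset Finset.inter_subset_right).2
            ⟨i, hiT, fun hmem => hiS (Finset.mem_inter.1 hmem).1⟩)
        omega
      have hcs : S.card < 4 * s := by omega
      have hcins : (insert i S).card = S.card + 1 := Finset.card_insert_of_notMem hiS
      -- per-column facts
      have hqn : ∀ j, j ∉ S → (n:ℝ) * ν ≤ ‖X j - proj X S (X j)‖ ^ 2 := by
        intro j hj
        exact re_dist_sq hRE hnν.le hj
          (by rw [Finset.card_insert_of_notMem hj]; omega)
      have hq0 : ∀ j, j ∉ S → X j - proj X S (X j) ≠ 0 := by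
        intro j hj h
        have h5 := hqn j hj
        rw [h, norm_zero] at h5
        norm_num at h5
        exact absurd h5 (not_le.2 hnν)
      set Xθ := ∑ j, θ j • X j with hXθdef
      -- maximality of the coordinate i
      have hstep : ∀ j, (hj : j ∉ S) → ‖proj X (insert j S) Xθ‖ ^ 2
          = ‖proj X S Xθ‖ ^ 2
            + ⟪X j - proj X S (X j), Xθ⟫ ^ 2 / ‖X j - proj X S (X j)‖ ^ 2 :=
        fun j hj => normsq_proj_insert (hq0 j hj) Xθ
      have hmax' : ∀ j ∈ T \ S,
          ⟪X j - proj X S (X j), Xθ⟫ ^ 2 / ‖X j - proj X S (X j)‖ ^ 2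
            ≤ ⟪X i - proj X S (X i), Xθ⟫ ^ 2 / ‖X i - proj X S (X i)‖ ^ 2 := by
        intro j hj
        have hjS : j ∉ S := (Finset.mem_sdiff.1 hj).2
        have h1 := hstep j hjS
        have h2 := hstep i hiS
        have h3 : ‖proj X (insert j S) Xθ‖ ^ 2 ≤ ‖proj X (insert i S) Xθ‖ ^ 2 :=
          pow_le_pow_left₀ (norm_nonneg _) (hmax j hj) 2
        linarith only [h1, h2, h3]
      -- the residual of the signal
      set r := Xθ - proj X S Xθ with hrdef
      set K := ∑ j ∈ T \ S, θ j ^ 2 with hKdef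
      have hrK : (n:ℝ) * ν * K ≤ ‖r‖ ^ 2 := by
        have hcu : (T ∪ S).card ≤ 6 * s := by
          have := Finset.card_union_le T S
          omega
        exact re_residual hRE hnν.le hcu θ hθ0
      have hrid : ‖r‖ ^ 2 = ∑ j ∈ T \ S, θ j * ⟪X j - proj X S (X j), Xθ⟫ := by
        have h0 : ‖r‖ ^ 2 = ⟪r, Xθ⟫ := by
          have ha : ⟪r, proj X S Xθ⟫ = 0 := by
            rw [real_inner_comm]
            exact inner_sub_proj_left S Xθ _ (proj_mem S Xθ)
          have hb : Xθ = r + proj X S Xθ := by rw [hrdef]; abel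
          calc ‖r‖ ^ 2 = ⟪r, r⟫ := (real_inner_self_eq_norm_sq r).symm
            _ = ⟪r, r⟫ + ⟪r, proj X S Xθ⟫ := by rw [ha, add_zero]
            _ = ⟪r, r + proj X S Xθ⟫ := (inner_add_right r _ _).symm
            _ = ⟪r, Xθ⟫ := by rw [← hb]
        have h1 : ⟪r, Xθ⟫ = ∑ j ∈ T, θ j * ⟪r, X j⟫ := by
          rw [show ⟪r, Xθ⟫ = ⟪r, ∑ j ∈ T, θ j • X j⟫ by rw [hXθT]]
          rw [inner_sum]
          exact Finset.sum_congr rfl fun j _ => real_inner_smul_right r (X j) (θ j)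
        have h2 : ∑ j ∈ T, θ j * ⟪r, X j⟫ = ∑ j ∈ T \ S, θ j * ⟪r, X j⟫ := by
          refine (Finset.sum_subset Finset.sdiff_subset fun j hjT hj => ?_).symm
          have hjS : j ∈ S := by
            by_contra hjS
            exact hj (Finset.mem_sdiff.2 ⟨hjT, hjS⟩)
          have : ⟪r, X j⟫ = 0 := by
            rw [real_inner_comm]
            exact inner_sub_proj_left S Xθ _ (mem_colSpan hjS)
          rw [this, mul_zero]
        have h3 : ∀ j ∈ T \ S, ⟪r, X j⟫ = ⟪X j - proj X S (X j), Xθ⟫ := by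
          intro j hj
          have hjS : j ∉ S := (Finset.mem_sdiff.1 hj).2
          have ha : ⟪r, proj X S (X j)⟫ = 0 := by
            rw [real_inner_comm]
            exact inner_sub_proj_left S Xθ _ (proj_mem S (X j))
          have hb : ⟪X j - proj X S (X j), proj X S Xθ⟫ = 0 := by
            rw [real_inner_comm]
            exact inner_sub_proj_left S (X j) _ (proj_mem S Xθ)
          calc ⟪r, X j⟫ = ⟪r, proj X S (X j)⟫ + ⟪r, X j - proj X S (X j)⟫ := by
                rw [← inner_add_right]; congr 1; abel
            _ = ⟪r, X j - proj X S (X j)⟫ := by rw [ha, zero_add]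
            _ = ⟪X j - proj X S (X j), r⟫ := real_inner_comm _ _
            _ = ⟪X j - proj X S (X j), Xθ⟫ - ⟪X j - proj X S (X j), proj X S Xθ⟫ := by
                rw [hrdef, inner_sub_right]
            _ = ⟪X j - proj X S (X j), Xθ⟫ := by rw [hb, sub_zero]
        rw [h0, h1, h2]
        exact Finset.sum_congr rfl fun j hj => by rw [h3 j hj]
      -- abbreviations for the chosen coordinate
      set a := ⟪X i - proj X S (X i), Xθ⟫ with hadef
      set nrm := ‖X i - proj X S (X i)‖ with hnrmdef
      have hnrmpos : 0 < nrm := by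
        rw [hnrmdef, norm_pos_iff]
        exact hq0 i hiS
      set A := |a| / nrm with hAdef
      have hApos : 0 ≤ A := by positivity
      have hA2 : A ^ 2 = a ^ 2 / nrm ^ 2 := by rw [hAdef, div_pow, sq_abs]
      -- each inner product is at most A times the column residual norm
      have habs : ∀ j ∈ T \ S,
          θ j * ⟪X j - proj X S (X j), Xθ⟫ ≤ |θ j| * (Real.sqrt n * A) := by
        intro j hj
        have hjS : j ∉ S := (Finset.mem_sdiff.1 hj).2
        have hnrmj : 0 < ‖X j - proj X S (X j)‖ := norm_pos_iff.2 (hq0 j hjS)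
        have h1 : ⟪X j - proj X S (X j), Xθ⟫ ^ 2
            ≤ (‖X j - proj X S (X j)‖ * A) ^ 2 := by
          have := hmax' j hj
          rw [← hA2] at this
          rw [mul_pow]
          calc ⟪X j - proj X S (X j), Xθ⟫ ^ 2
              = (⟪X j - proj X S (X j), Xθ⟫ ^ 2 / ‖X j - proj X S (X j)‖ ^ 2)
                * ‖X j - proj X S (X j)‖ ^ 2 := by field_simp
            _ ≤ A ^ 2 * ‖X j - proj X S (X j)‖ ^ 2 :=
                mul_le_mul_of_nonneg_right this (by positivity)
            _ = ‖X j - proj X S (X j)‖ ^ 2 * A ^ 2 := by ring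
        have h2 : |⟪X j - proj X S (X j), Xθ⟫| ≤ ‖X j - proj X S (X j)‖ * A := by
          have h4 := Real.sqrt_le_sqrt h1
          rwa [Real.sqrt_sq_eq_abs, Real.sqrt_sq (mul_nonneg hnrmj.le hApos)] at h4
        have h3 : ‖X j - proj X S (X j)‖ ≤ Real.sqrt n := by
          rw [← hX j]
          exact norm_sub_proj_le S (X j)
        calc θ j * ⟪X j - proj X S (X j), Xθ⟫
            ≤ |θ j * ⟪X j - proj X S (X j), Xθ⟫| := le_abs_self _
          _ = |θ j| * |⟪X j - proj X S (X j), Xθ⟫| := abs_mul _ _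
          _ ≤ |θ j| * (‖X j - proj X S (X j)‖ * A) :=
              mul_le_mul_of_nonneg_left h2 (abs_nonneg _)
          _ ≤ |θ j| * (Real.sqrt n * A) :=
              mul_le_mul_of_nonneg_left
                (mul_le_mul_of_nonneg_right h3 hApos) (abs_nonneg _)
      have hrup : ‖r‖ ^ 2 ≤ (∑ j ∈ T \ S, |θ j|) * (Real.sqrt n * A) := by
        rw [hrid, Finset.sum_mul]
        exact Finset.sum_le_sum habs
      -- Cauchy–Schwarz
      have hcauchy : (∑ j ∈ T \ S, |θ j|) ^ 2 ≤ ((T \ S).card : ℝ) * K := by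
        have := sq_sum_le_card_mul_sum_sq (s := T \ S) (f := fun j => |θ j|)
        calc (∑ j ∈ T \ S, |θ j|) ^ 2 ≤ ((T \ S).card : ℝ) * ∑ j ∈ T \ S, |θ j| ^ 2 :=
            this
          _ = ((T \ S).card : ℝ) * K := by
            rw [hKdef]
            congr 1
            exact Finset.sum_congr rfl fun j _ => sq_abs (θ j)
      -- beta-min
      set k := ((T \ S).card : ℝ) with hkdef
      have hk1 : (1:ℝ) ≤ k := by
        rw [hkdef]
        exact_mod_cast Finset.card_pos.2 ⟨i, hiTS⟩
      have hKk : k * (8 * β * D * Real.log p / ((n:ℝ) * ν ^ 2)) ≤ K := by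
        rw [hKdef, hkdef]
        have := Finset.card_nsmul_le_sum (T \ S) (fun j => θ j ^ 2)
          (8 * β * D * Real.log p / ((n:ℝ) * ν ^ 2))
          (fun j hj => hmin j (Finset.mem_sdiff.1 hj).1)
        rw [nsmul_eq_mul] at this
        exact this
      have hmpos : 0 < 8 * β * D * Real.log p / ((n:ℝ) * ν ^ 2) := by positivity
      have hKpos : 0 < K :=
        lt_of_lt_of_le (mul_pos (lt_of_lt_of_le one_pos hk1) hmpos) hKk
      -- the squared-norm gain of the signal is at least 8 β D log p
      have hA8 : 8 * β * D * Real.log p ≤ A ^ 2 := by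
        have hsq : ((n:ℝ) * ν * K) ^ 2 ≤ ((∑ j ∈ T \ S, |θ j|) * (Real.sqrt n * A)) ^ 2 :=
          pow_le_pow_left₀ (by positivity) (hrK.trans hrup) 2
        have hsn : Real.sqrt n ^ 2 = (n:ℝ) := Real.sq_sqrt (Nat.cast_nonneg n)
        have h5 : ((n:ℝ) * ν * K) ^ 2 ≤ (k * K) * ((n:ℝ) * A ^ 2) := by
          calc ((n:ℝ) * ν * K) ^ 2
              ≤ ((∑ j ∈ T \ S, |θ j|) * (Real.sqrt n * A)) ^ 2 := hsq
            _ = (∑ j ∈ T \ S, |θ j|) ^ 2 * ((n:ℝ) * A ^ 2) := by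
                rw [mul_pow, mul_pow, hsn]
            _ ≤ (k * K) * ((n:ℝ) * A ^ 2) := by
                apply mul_le_mul_of_nonneg_right hcauchy (by positivity)
        -- from n²ν²K² ≤ kK n A², divide by n K
        have hn0 : (0:ℝ) < n := by exact_mod_cast hn
        have h6 : (n:ℝ) * ν ^ 2 * K ≤ k * A ^ 2 := by
          have h7 : ((n:ℝ) * ν ^ 2 * K) * ((n:ℝ) * K) ≤ (k * A ^ 2) * ((n:ℝ) * K) := by
            calc ((n:ℝ) * ν ^ 2 * K) * ((n:ℝ) * K) = ((n:ℝ) * ν * K) ^ 2 := by ring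
              _ ≤ (k * K) * ((n:ℝ) * A ^ 2) := h5
              _ = (k * A ^ 2) * ((n:ℝ) * K) := by ring
          exact le_of_mul_le_mul_right h7 (by positivity)
        -- and K ≥ k m
        have h8 : k * ((n:ℝ) * ν ^ 2 * (8 * β * D * Real.log p / ((n:ℝ) * ν ^ 2)))
            ≤ k * A ^ 2 := by
          calc k * ((n:ℝ) * ν ^ 2 * (8 * β * D * Real.log p / ((n:ℝ) * ν ^ 2)))
              = (n:ℝ) * ν ^ 2 * (k * (8 * β * D * Real.log p / ((n:ℝ) * ν ^ 2))) := by
                ring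
            _ ≤ (n:ℝ) * ν ^ 2 * K := by
                apply mul_le_mul_of_nonneg_left hKk (by positivity)
            _ ≤ k * A ^ 2 := h6
        have h9 : (n:ℝ) * ν ^ 2 * (8 * β * D * Real.log p / ((n:ℝ) * ν ^ 2))
            = 8 * β * D * Real.log p := by
          field_simp
        rw [h9] at h8
        exact le_of_mul_le_mul_left h8 (lt_of_lt_of_le one_pos hk1)
      -- noise bound
      set b := (inner ℝ (X i - proj X S (X i)) ε : ℝ) with hbdef
      have hb : b ^ 2 ≤ (n:ℝ) * L * ν * Real.log p := hE S (by omega) i hiS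
      have hb' : (b / nrm) ^ 2 ≤ L * Real.log p := by
        have h1 : b ^ 2 / nrm ^ 2 ≤ ((n:ℝ) * L * ν * Real.log p) / ((n:ℝ) * ν) :=
          div_le_div₀ (by positivity) hb hnν (hqn i hiS)
        have h2 : ((n:ℝ) * L * ν * Real.log p) / ((n:ℝ) * ν) = L * Real.log p := by
          field_simp
        rw [div_pow]
        exact h1.trans_eq h2
      -- the gain in G
      have hqY : ⟪X i - proj X S (X i), Y⟫ = a + b := by
        rw [hY, inner_add_right, ← hadef, ← hbdef]
      have hgain : ‖proj X (insert i S) Y‖ ^ 2 = ‖proj X S Y‖ ^ 2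
          + (a / nrm + b / nrm) ^ 2 := by
        rw [normsq_proj_insert (hq0 i hiS) Y, hqY, ← hnrmdef, ← add_div, div_pow]
      have hkey2 : (9/2) * β * D * Real.log p ≤ (a / nrm + b / nrm) ^ 2 := by
        have hA2' : 8 * β * D * Real.log p ≤ (a / nrm) ^ 2 := by
          rw [div_pow, ← hA2]
          exact hA8
        have hb2 : (b / nrm) ^ 2 ≤ (β * D / 2) * Real.log p := by
          calc (b / nrm) ^ 2 ≤ L * Real.log p := hb'
            _ ≤ (β * D / 2) * Real.log p := by
                have h4 := mul_le_mul_of_nonneg_right hβD hlogp.le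
                linarith only [h4]
        have h4 := quad_aux (c := β * D * Real.log p) (by positivity)
          (by linarith only [hA2']) (by linarith only [hb2]) (x := a / nrm) (y := b / nrm)
        linarith only [h4]
      -- trace bound
      have htr : LinearMap.trace ℝ (EuclideanSpace ℝ (Fin n)) (proj X (insert i S))
          ≤ LinearMap.trace ℝ (EuclideanSpace ℝ (Fin n)) (proj X S) + 1 := by
        rw [trace_proj, trace_proj]
        have h1 : Module.finrank ℝ (colSpan X (insert i S))
            ≤ Module.finrank ℝ (colSpan X S) + Module.finrank ℝ (ℝ ∙ X i) := by
          rw [colSpan_insert]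
          exact Submodule.finrank_add_le_finrank_add_finrank _ _
        have h2 : Module.finrank ℝ (ℝ ∙ X i) ≤ 1 := by
          by_cases hx : X i = 0
          · rw [hx, Submodule.span_zero_singleton]
            simp
          · rw [finrank_span_singleton hx]
        have : Module.finrank ℝ (colSpan X (insert i S))
            ≤ Module.finrank ℝ (colSpan X S) + 1 := by omega
        exact_mod_cast this
      -- put it together
      rw [hgain, if_neg (show ¬ 4 * s < S.card by omega),
        if_neg (show ¬ 4 * s < (insert i S).card by omega)]
      have hcR : ((insert i S).card : ℝ) = (S.card : ℝ) + 1 := by exact_mod_cast hcins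
      rw [hcR, add_div]
      have hgβ : (9/2) * D * Real.log p ≤ (a / nrm + b / nrm) ^ 2 / β := by
        rw [le_div_iff₀ hβ,
          show (9:ℝ)/2 * D * Real.log p * β = 9/2 * β * D * Real.log p from by ring]
        linarith only [hkey2]
      have htrβ : 2 * LinearMap.trace ℝ (EuclideanSpace ℝ (Fin n)) (proj X (insert i S)) / β
          ≤ 2 * LinearMap.trace ℝ (EuclideanSpace ℝ (Fin n)) (proj X S) / β + 2 / β := by
        rw [← add_div]
        exact (div_le_div_iff_of_pos_right hβ).2 (by linarith only [htr])
      linarith only [hgβ, htrβ, hβD']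
  refine ⟨?_, ?_⟩
  · unfold postPi
    rw [← mul_div_assoc]
    exact (div_le_div_iff_of_pos_right hZ).2 key
  · have h1 : (1:ℝ) ≤ Real.exp ((D/2) * Real.log p) :=
      Real.one_le_exp (by positivity)
    have h0 : 0 ≤ postPi X Y β D s S :=
      div_nonneg (Real.exp_pos _).le hZ.le
    calc postPi X Y β D s S = 1 * postPi X Y β D s S := (one_mul _).symm
      _ ≤ Real.exp ((D/2) * Real.log p) * postPi X Y β D s S :=
          mul_le_mul_of_nonneg_right h1 h0

end
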